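/- If γ is a real symplectic 2n×2n matrix and λ is an eigenvalue of γ on the unit circle that is a simple root of the characteristic polynomial, then λ is Krein definite: the quadratic form x ↦ (x,x)_G is either strictly positive or strictly negative on all nonzero vectors of the eigenspace ker(λI - γ). -/

import Mathlib

open Matrix Complex

noncomputable def JmatR (n : ℕ) : Matrix (Fin n ⊕ Fin n) (Fin n ⊕ Fin n) ℝ :=
  Matrix.fromBlocks 0 1 (-1) 0

noncomputable def Jmat (n : ℕ) : Matrix (Fin n ⊕ Fin n) (Fin n ⊕ Fin n) ℂ :=
  Matrix.fromBlocks 0 1 (-1) 0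

/-- The Krein form `(x,y)_G = i ⟨x, J y⟩`. -/
noncomputable def krein (n : ℕ) (x y : (Fin n ⊕ Fin n) → ℂ) : ℂ :=
  Complex.I * ∑ j, x j * (starRingEnd ℂ) ((Jmat n).mulVec y j)

section Aux

open Polynomial

lemma Jmat_eq_map (n : ℕ) : Jmat n = (JmatR n).map Complex.ofReal := by
  have h1 : (1 : Matrix (Fin n) (Fin n) ℝ).map Complex.ofReal = 1 :=
    Matrix.map_one _ ofReal_zero ofReal_one
  have hn1 : (-1 : Matrix (Fin n) (Fin n) ℝ).map Complex.ofReal = -1 := by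
    ext i j; simp [Matrix.map_apply, Matrix.one_apply, apply_ite Complex.ofReal]
  simp [Jmat, JmatR, Matrix.fromBlocks_map, Matrix.map_zero _ ofReal_zero, h1, hn1]

lemma Jmat_mul_Jmat (n : ℕ) : Jmat n * Jmat n = -1 := by
  simp [Jmat, Matrix.fromBlocks_multiply, ← Matrix.fromBlocks_one, Matrix.fromBlocks_neg]

lemma Jmat_transpose (n : ℕ) : (Jmat n)ᵀ = -(Jmat n) := by
  simp [Jmat, Matrix.fromBlocks_transpose, Matrix.fromBlocks_neg]

lemma krein_eq (n : ℕ) (x y : (Fin n ⊕ Fin n) → ℂ) :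
    krein n x y = Complex.I * (x ⬝ᵥ star ((Jmat n) *ᵥ y)) := rfl

lemma map_mul_real {m : Type*} [Fintype m] (M N : Matrix m m ℝ) :
    (M * N).map Complex.ofReal = M.map Complex.ofReal * N.map Complex.ofReal := by
  ext i j; simp [Matrix.mul_apply, Matrix.map_apply]

lemma map_transpose_real {m : Type*} (M : Matrix m m ℝ) :
    (M.map Complex.ofReal)ᵀ = Mᵀ.map Complex.ofReal := by
  ext i j; simp [Matrix.map_apply]

lemma star_mulVec_real {m : Type*} [Fintype m] (M : Matrix m m ℝ) (z : m → ℂ) :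
    star ((M.map Complex.ofReal) *ᵥ z) = (M.map Complex.ofReal) *ᵥ star z := by
  funext j
  simp [Matrix.mulVec, dotProduct, map_sum, Matrix.map_apply, mul_comm]

lemma mulVec_dot {m : Type*} [Fintype m] (A : Matrix m m ℂ) (v w : m → ℂ) :
    (A *ᵥ v) ⬝ᵥ w = v ⬝ᵥ (Aᵀ *ᵥ w) := by
  rw [Matrix.dotProduct_mulVec, Matrix.vecMul_transpose, dotProduct_comm]

lemma charpoly_sub_smul_one {m : Type*} [Fintype m] [DecidableEq m]
    (A : Matrix m m ℂ) (lam : ℂ) :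
    (A - lam • 1).charpoly = A.charpoly.comp (X + C lam) := by
  have h1 : A.charpoly.comp (X + C lam)
      = (Polynomial.eval₂RingHom Polynomial.C (X + C lam)) A.charpoly := by
    simp [Polynomial.comp, Polynomial.eval₂RingHom]
  have h2 : (Polynomial.eval₂RingHom Polynomial.C (X + C lam)) A.charpoly
      = ((Polynomial.eval₂RingHom Polynomial.C (X + C lam)).mapMatrix A.charmatrix).det := by
    rw [Matrix.charpoly, RingHom.map_det]
  rw [h1, h2, Matrix.charpoly]
  congr 1
  ext i j
  by_cases h : i = j <;>
    simp [h, Matrix.charmatrix_apply, Matrix.map_apply, Matrix.one_apply, Matrix.smul_apply,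
      Matrix.sub_apply]
  · ring

lemma finrank_ker_le {m : Type*} [Fintype m] [DecidableEq m] (A : Matrix m m ℂ) (lam : ℂ)
    (h : A.charpoly.rootMultiplicity lam = 1) :
    Module.finrank ℂ (LinearMap.ker ((A - lam • 1).mulVecLin)) ≤ 1 := by
  set φ : Module.End ℂ (m → ℂ) := (A - lam • 1).mulVecLin with hφ
  have hker : LinearMap.ker φ ≤ φ.maxGenEigenspace 0 := by
    intro z hz
    rw [Module.End.mem_maxGenEigenspace]
    exact ⟨1, by simpa [LinearMap.mem_ker.mp hz] using rfl⟩
  have hchar : φ.charpoly = (A - lam • 1).charpoly := by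
    rw [← LinearMap.charpoly_toMatrix φ (Pi.basisFun ℂ m)]
    congr 1
    rw [LinearMap.toMatrix_eq_toMatrix']
    exact LinearMap.toMatrix'_toLin' _
  calc Module.finrank ℂ (LinearMap.ker φ)
      ≤ Module.finrank ℂ (φ.maxGenEigenspace 0) := Submodule.finrank_mono hker
    _ = (φ.charpoly).natTrailingDegree := LinearMap.finrank_maxGenEigenspace_zero_eq φ
    _ = 1 := by
        rw [hchar, charpoly_sub_smul_one, ← Polynomial.rootMultiplicity_eq_natTrailingDegree, h]

end Aux

/-- A simple eigenvalue of a real symplectic matrix on the unit circle is Krein definite. -/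
theorem simple_eigenvalue_krein_definite (n : ℕ)
    (γ : Matrix (Fin n ⊕ Fin n) (Fin n ⊕ Fin n) ℝ)
    (hγ : γᵀ * JmatR n * γ = JmatR n)
    (lam : ℂ) (hU : ‖lam‖ = 1)
    (hroot : ((γ.map Complex.ofReal).charpoly).IsRoot lam)
    (hsimple : ((γ.map Complex.ofReal).charpoly).rootMultiplicity lam = 1) :
    (∀ x : (Fin n ⊕ Fin n) → ℂ, x ≠ 0 →
        (γ.map Complex.ofReal).mulVec x = lam • x → 0 < (krein n x x).re) ∨
    (∀ x : (Fin n ⊕ Fin n) → ℂ, x ≠ 0 →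
        (γ.map Complex.ofReal).mulVec x = lam • x → (krein n x x).re < 0) := by
  classical
  set A : Matrix (Fin n ⊕ Fin n) (Fin n ⊕ Fin n) ℂ := γ.map Complex.ofReal with hAdef
  -- complexified symplectic relation
  have hAJ : Aᵀ * Jmat n * A = Jmat n := by
    have h0 := congrArg (fun M : Matrix _ _ ℝ => M.map Complex.ofReal) hγ
    simp only [map_mul_real] at h0
    rw [hAdef, Jmat_eq_map, map_transpose_real]; exact h0
  have hlam : (starRingEnd ℂ) lam * lam = 1 := by
    have := Complex.mul_conj lam
    rw [Complex.normSq_eq_norm_sq, hU] at this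
    push_cast at this
    rw [mul_comm] at this
    simpa using this
  have key : ∀ v w : (Fin n ⊕ Fin n) → ℂ,
      (A *ᵥ v) ⬝ᵥ ((Jmat n) *ᵥ (A *ᵥ w)) = v ⬝ᵥ ((Jmat n) *ᵥ w) := by
    intro v w
    rw [mulVec_dot, Matrix.mulVec_mulVec, Matrix.mulVec_mulVec, hAJ]
  have starA : ∀ z, star (A *ᵥ z) = A *ᵥ star z := fun z => star_mulVec_real γ z
  have starJ : ∀ z, star ((Jmat n) *ᵥ z) = (Jmat n) *ᵥ star z := by
    intro z; rw [Jmat_eq_map]; exact star_mulVec_real _ z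
  -- the pairing function
  set g : ((Fin n ⊕ Fin n) → ℂ) → ((Fin n ⊕ Fin n) → ℂ) → ℂ :=
    fun x y => x ⬝ᵥ ((Jmat n) *ᵥ star y) with hgdef
  have krein_g : ∀ x y, krein n x y = Complex.I * g x y := by
    intro x y; rw [krein_eq, starJ]
  have g_smul_left : ∀ (a : ℂ) x y, g (a • x) y = a * g x y := by
    intro a x y; simp [hgdef, smul_dotProduct]
  have g_smul_right : ∀ (a : ℂ) x y, g x (a • y) = (starRingEnd ℂ) a * g x y := by
    intro a x y
    simp [hgdef, star_smul, Matrix.mulVec_smul, dotProduct_smul, Complex.star_def,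
      smul_eq_mul]
  -- Krein form of a vector with itself is real
  have krein_real : ∀ x, (starRingEnd ℂ) (krein n x x) = krein n x x := by
    intro x
    have h1 : (starRingEnd ℂ) (g x x) = star x ⬝ᵥ ((Jmat n) *ᵥ x) := by
      show star (x ⬝ᵥ ((Jmat n) *ᵥ star x)) = _
      rw [← Matrix.star_dotProduct_star, starJ, star_star, dotProduct_comm]
    have h2 : g x x = -(star x ⬝ᵥ ((Jmat n) *ᵥ x)) := by
      show x ⬝ᵥ ((Jmat n) *ᵥ star x) = _
      rw [dotProduct_comm, mulVec_dot, Jmat_transpose, Matrix.neg_mulVec,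
        dotProduct_neg]
    rw [krein_g, _root_.map_mul, Complex.conj_I, h1, h2]
    ring
  -- additivity in the second argument
  have g_add_right : ∀ x y z, g x (y + z) = g x y + g x z := by
    intro x y z
    simp [hgdef, star_add, Matrix.mulVec_add, dotProduct_add]
  -- eigen-equivariance in the second argument
  have g_A : ∀ x, A *ᵥ x = lam • x → ∀ y, g x (A *ᵥ y) = (starRingEnd ℂ) lam * g x y := by
    intro x hx y
    have h1 := key x (star y)
    rw [hx, ← starA, smul_dotProduct, smul_eq_mul] at h1
    have h2 := congrArg (fun t => (starRingEnd ℂ) lam * t) h1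
    rw [← mul_assoc, hlam, one_mul] at h2
    exact h2
  have g_pow : ∀ x, A *ᵥ x = lam • x → ∀ (k : ℕ) (y : (Fin n ⊕ Fin n) → ℂ),
      g x ((A ^ k) *ᵥ y) = ((starRingEnd ℂ) lam) ^ k * g x y := by
    intro x hx k
    induction k with
    | zero => intro y; simp
    | succ k ih =>
      intro y
      have h3 : (A ^ (k + 1)) *ᵥ y = (A ^ k) *ᵥ (A *ᵥ y) := by
        rw [Matrix.mulVec_mulVec, ← pow_succ]
      rw [h3, ih, g_A x hx, pow_succ, mul_assoc]
  have g_poly : ∀ x, A *ᵥ x = lam • x → ∀ (r : Polynomial ℂ) (y : (Fin n ⊕ Fin n) → ℂ),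
      g x ((Polynomial.aeval A r) *ᵥ y) = (starRingEnd ℂ) (r.eval lam) * g x y := by
    intro x hx r
    induction r using Polynomial.induction_on' with
    | add p q hp hq =>
      intro y
      rw [map_add, Matrix.add_mulVec, g_add_right, hp, hq, Polynomial.eval_add, map_add, add_mul]
    | monomial k a =>
      intro y
      have h4 : (Polynomial.aeval A) (Polynomial.monomial k a) = a • A ^ k := by
        simp [Polynomial.aeval_monomial, Algebra.algebraMap_eq_smul_one, smul_mul_assoc]
      rw [h4, Matrix.smul_mulVec, g_smul_right, g_pow x hx k,
        Polynomial.eval_monomial, _root_.map_mul, map_pow, mul_assoc]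
  -- the eigenspace as a kernel
  set φ : Module.End ℂ ((Fin n ⊕ Fin n) → ℂ) := (A - lam • 1).mulVecLin with hφdef
  have hφz : ∀ z, φ z = A *ᵥ z - lam • z := by
    intro z
    show (A - lam • 1) *ᵥ z = _
    rw [Matrix.sub_mulVec, Matrix.smul_mulVec, Matrix.one_mulVec]
  have mem_ker_iff : ∀ z, z ∈ LinearMap.ker φ ↔ A *ᵥ z = lam • z := by
    intro z
    rw [LinearMap.mem_ker, hφz, sub_eq_zero]
  have span_eq : ∀ x, x ≠ 0 → A *ᵥ x = lam • x →
      LinearMap.ker φ = Submodule.span ℂ {x} := by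
    intro x hx0 hx
    refine (Submodule.eq_of_le_of_finrank_le
      ((Submodule.span_singleton_le_iff_mem x _).mpr ((mem_ker_iff x).mpr hx)) ?_).symm
    rw [finrank_span_singleton hx0]
    exact finrank_ker_le A lam hsimple
  -- nondegeneracy on the eigenspace
  have main : ∀ x, x ≠ 0 → A *ᵥ x = lam • x → g x x ≠ 0 := by
    intro x hx0 hx hgxx
    have hspan := span_eq x hx0 hx
    obtain ⟨q, hq⟩ := Polynomial.dvd_iff_isRoot.mpr hroot
    have hql : q.eval lam ≠ 0 := by
      intro h
      obtain ⟨q', hq'⟩ := Polynomial.dvd_iff_isRoot.mpr h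
      have hdvd : ((Polynomial.X - Polynomial.C lam) ^ 2 : Polynomial ℂ) ∣ A.charpoly :=
        ⟨q', by rw [hq, hq']; ring⟩
      have h2 := (Polynomial.le_rootMultiplicity_iff (A.charpoly_monic.ne_zero)).mpr hdvd
      omega
    have hall : ∀ y, g x y = 0 := by
      intro y
      set u := (Polynomial.aeval A q) *ᵥ y with hu
      have hAlam : Polynomial.aeval A (Polynomial.X - Polynomial.C lam) = A - lam • 1 := by
        simp [Algebra.algebraMap_eq_smul_one]
      have hu0 : φ u = 0 := by
        show (A - lam • 1) *ᵥ u = 0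
        rw [hu, Matrix.mulVec_mulVec, ← hAlam, ← _root_.map_mul, ← hq,
          Matrix.aeval_self_charpoly, Matrix.zero_mulVec]
      have humem : u ∈ Submodule.span ℂ ({x} : Set _) := hspan ▸ LinearMap.mem_ker.mpr hu0
      obtain ⟨a, ha⟩ := Submodule.mem_span_singleton.mp humem
      have h1 : g x u = 0 := by
        rw [← ha, g_smul_right, hgxx, mul_zero]
      rw [hu, g_poly x hx q y] at h1
      rcases mul_eq_zero.mp h1 with h | h
      · exact absurd (by simpa using h) hql
      · exact h
    -- hall gives x = 0
    apply hx0
    funext j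
    have hv : ∀ v, x ⬝ᵥ v = 0 := by
      intro v
      have h5 := hall (star ((-(Jmat n)) *ᵥ v))
      have h6 : (Jmat n) *ᵥ star (star ((-(Jmat n)) *ᵥ v)) = v := by
        rw [star_star, Matrix.mulVec_mulVec, mul_neg, Jmat_mul_Jmat, neg_neg,
          Matrix.one_mulVec]
      rw [hgdef] at h5
      simp only at h5
      rw [h6] at h5
      exact h5
    have h7 := hv (Pi.single j 1)
    simpa [dotProduct_single] using h7
  -- realness and nonvanishing of the diagonal Krein form
  have krein_ne : ∀ x, x ≠ 0 → A *ᵥ x = lam • x →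
      (krein n x x).re ≠ 0 ∧ (krein n x x).im = 0 := by
    intro x hx0 hx
    have him : (krein n x x).im = 0 := Complex.conj_eq_iff_im.mp (krein_real x)
    refine ⟨?_, him⟩
    intro hre
    have hzero : krein n x x = 0 := Complex.ext (by simp [hre]) (by simp [him])
    have hg : g x x = 0 := by
      have h8 := (krein_g x x).symm.trans hzero
      rcases mul_eq_zero.mp h8 with h | h
      · exact absurd h Complex.I_ne_zero
      · exact h
    exact main x hx0 hx hg
  -- scaling
  have krein_scale : ∀ (a : ℂ) (x : (Fin n ⊕ Fin n) → ℂ),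
      krein n (a • x) (a • x) = ((Complex.normSq a : ℝ) : ℂ) * krein n x x := by
    intro a x
    rw [krein_g, krein_g, g_smul_left, g_smul_right]
    have h9 : a * ((starRingEnd ℂ) a * g x x) = ((Complex.normSq a : ℝ) : ℂ) * g x x := by
      rw [← mul_assoc, Complex.mul_conj]
    rw [h9]
    ring
  -- conclusion
  by_cases hex : ∃ x₀, x₀ ≠ 0 ∧ A *ᵥ x₀ = lam • x₀ ∧ 0 < (krein n x₀ x₀).re
  · left
    obtain ⟨x₀, hx₀0, hx₀e, hx₀p⟩ := hex
    intro x hx0 hxe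
    have hspan := span_eq x₀ hx₀0 hx₀e
    obtain ⟨a, ha⟩ := Submodule.mem_span_singleton.mp (hspan ▸ (mem_ker_iff x).mpr hxe)
    have ha0 : a ≠ 0 := by
      rintro rfl
      rw [zero_smul] at ha
      exact hx0 ha.symm
    rw [← ha, krein_scale, Complex.re_ofReal_mul]
    exact mul_pos (Complex.normSq_pos.mpr ha0) hx₀p
  · right
    intro x hx0 hxe
    obtain ⟨hre, _⟩ := krein_ne x hx0 hxe
    rcases lt_or_gt_of_ne hre with h | h
    · exact h
    · exact absurd ⟨x, hx0, hxe, h⟩ hex
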